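/- For every odd positive integer n there exists an integer Chebyshev polynomial of degree n on [0,1] of the form q(x) = (2x−1)·p(x(1−x)), where p is a polynomial with integer coefficients of degree (n−1)/2; that is, (sup_{x∈[0,1]} |q(x)|)^{1/n} = t_{ℤ,n}([0,1]). -/

import Mathlib

open Polynomial Filter

/-- The supremum norm of an integer polynomial on the interval `[a, b]`. -/
noncomputable def supNorm (p : Polynomial ℤ) (a b : ℝ) : ℝ :=
  sSup ((fun x => |Polynomial.aeval x p|) '' Set.Icc a b)

/-- `tZ n a b` is the infimum over nonzero integer polynomials `p` of degree at most `n`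
of `(sup_{x ∈ [a,b]} |p(x)|)^(1/n)`. -/
noncomputable def tZ (n : ℕ) (a b : ℝ) : ℝ :=
  sInf {r : ℝ | ∃ p : Polynomial ℤ, p ≠ 0 ∧ p.natDegree ≤ n ∧
    r = supNorm p a b ^ ((1 : ℝ) / n)}

namespace IntCheb

lemma img_nonempty (f : Polynomial ℤ) :
    ((fun x : ℝ => |(aeval x f : ℝ)|) '' Set.Icc 0 1).Nonempty :=
  ⟨_, Set.mem_image_of_mem _ (Set.left_mem_Icc.2 zero_le_one)⟩

lemma img_bdd (f : Polynomial ℤ) :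
    BddAbove ((fun x : ℝ => |(aeval x f : ℝ)|) '' Set.Icc 0 1) :=
  (isCompact_Icc.image (f.continuous_aeval).abs).bddAbove

lemma le_supNorm (f : Polynomial ℤ) {x : ℝ} (hx : x ∈ Set.Icc (0:ℝ) 1) :
    |(aeval x f : ℝ)| ≤ supNorm f 0 1 :=
  le_csSup (img_bdd f) (Set.mem_image_of_mem _ hx)

lemma supNorm_le (f : Polynomial ℤ) {K : ℝ}
    (h : ∀ x ∈ Set.Icc (0:ℝ) 1, |(aeval x f : ℝ)| ≤ K) :
    supNorm f 0 1 ≤ K :=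
  csSup_le (img_nonempty f) (by rintro r ⟨x, hx, rfl⟩; exact h x hx)

lemma supNorm_nonneg (f : Polynomial ℤ) : 0 ≤ supNorm f 0 1 :=
  le_trans (abs_nonneg _) (le_supNorm f (Set.left_mem_Icc.2 zero_le_one))

lemma supNorm_one : supNorm (1 : Polynomial ℤ) 0 1 = 1 := by
  have h0 : (fun x : ℝ => |(aeval x (1 : Polynomial ℤ) : ℝ)|) = fun _ => (1:ℝ) := by
    funext x; simp
  rw [_root_.supNorm, h0, Set.Nonempty.image_const (Set.nonempty_Icc.mpr zero_le_one) 1,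
    csSup_singleton]

lemma supNorm_pos {f : Polynomial ℤ} (hf : f ≠ 0) : 0 < supNorm f 0 1 := by
  have hinj : Function.Injective (algebraMap ℤ ℝ) := by
    rw [algebraMap_int_eq]
    intro a b h
    have h' : (a : ℝ) = (b : ℝ) := h
    exact_mod_cast h'
  have hmap : f.map (algebraMap ℤ ℝ) ≠ 0 := by
    rw [Ne, Polynomial.map_eq_zero_iff hinj]
    exact hf
  have hfin := Polynomial.finite_setOf_isRoot hmap
  obtain ⟨x, hx⟩ := ((Set.Icc_infinite (zero_lt_one (α := ℝ))).diff hfin).nonempty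
  have hxI : x ∈ Set.Icc (0:ℝ) 1 := hx.1
  have hxr : ¬ (f.map (algebraMap ℤ ℝ)).IsRoot x := hx.2
  have : (aeval x f : ℝ) ≠ 0 := by
    rwa [aeval_def, ← Polynomial.eval_map]
  calc (0:ℝ) < |(aeval x f : ℝ)| := abs_pos.2 this
    _ ≤ supNorm f 0 1 := le_supNorm f hxI


def phi (n : ℕ) (q : Polynomial ℤ) (j : ℕ) : ℤ :=
  ∑ i ∈ Finset.range (n+1), q.coeff i * (j:ℤ)^i * (n:ℤ)^(n-i)

lemma phi_eq (n : ℕ) (hn : 0 < n) (q : Polynomial ℤ) (hq : q.natDegree ≤ n) (j : ℕ) :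
    ((phi n q j : ℤ) : ℝ) = (n:ℝ)^n * aeval ((j:ℝ)/n) q := by
  have hn' : (n:ℝ) ≠ 0 := Nat.cast_ne_zero.2 hn.ne'
  have hdeg : (q.map (algebraMap ℤ ℝ)).natDegree < n + 1 :=
    lt_of_le_of_lt (le_trans Polynomial.natDegree_map_le hq) (Nat.lt_succ_self n)
  have hev : (aeval ((j:ℝ)/n) q : ℝ)
      = ∑ i ∈ Finset.range (n+1), (q.coeff i : ℝ) * ((j:ℝ)/n)^i := by
    rw [aeval_def, ← Polynomial.eval_map, Polynomial.eval_eq_sum_range' hdeg]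
    refine Finset.sum_congr rfl fun i _ => ?_
    simp [Polynomial.coeff_map]
  rw [hev, Finset.mul_sum, phi]
  push_cast
  refine Finset.sum_congr rfl fun i hi => ?_
  have hi' : i ≤ n := Nat.lt_succ_iff.mp (Finset.mem_range.mp hi)
  have hpow : (n:ℝ)^n = (n:ℝ)^(n-i) * (n:ℝ)^i := by
    rw [← pow_add, Nat.sub_add_cancel hi']
  rw [div_pow, hpow]
  field_simp

lemma finite_T (n : ℕ) (hn : 0 < n) :
    {q : Polynomial ℤ | q ≠ 0 ∧ q.natDegree ≤ n ∧ supNorm q 0 1 ≤ 1}.Finite := by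
  set T := {q : Polynomial ℤ | q ≠ 0 ∧ q.natDegree ≤ n ∧ supNorm q 0 1 ≤ 1} with hT
  have hn' : (n:ℝ) ≠ 0 := Nat.cast_ne_zero.2 hn.ne'
  have hmem : ∀ j : Fin (n+1), ((j:ℕ):ℝ)/n ∈ Set.Icc (0:ℝ) 1 := by
    intro j
    constructor
    · positivity
    · rw [div_le_one (by positivity)]
      exact_mod_cast Nat.cast_le.mpr (Nat.lt_succ_iff.mp j.isLt)
  have hInj : Set.InjOn (fun q => fun j : Fin (n+1) => phi n q (j:ℕ)) T := by
    rintro q hq q' hq' h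
    have hae : ∀ j : Fin (n+1), (aeval (((j:ℕ):ℝ)/n) (q - q') : ℝ) = 0 := by
      intro j
      have h1 : phi n q (j:ℕ) = phi n q' (j:ℕ) := congrFun h j
      have h2 : ((phi n q (j:ℕ) : ℤ) : ℝ) = ((phi n q' (j:ℕ) : ℤ) : ℝ) := by
        exact_mod_cast h1
      rw [phi_eq n hn q hq.2.1 j, phi_eq n hn q' hq'.2.1 j] at h2
      have h3 : (aeval (((j:ℕ):ℝ)/n) q : ℝ) = aeval (((j:ℕ):ℝ)/n) q' := by
        have := mul_left_cancel₀ (pow_ne_zero n hn') h2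
        exact this
      rw [map_sub, h3, sub_self]
    have hptinj : Function.Injective (fun j : Fin (n+1) => ((j:ℕ):ℝ)/n) := by
      intro a b hab
      field_simp at hab
      exact Fin.ext (by exact_mod_cast hab)
    have hz : ((q - q').map (algebraMap ℤ ℝ)) = 0 := by
      apply Polynomial.eq_zero_of_natDegree_lt_card_of_eval_eq_zero _ hptinj
      · intro j
        rw [Polynomial.eval_map, ← aeval_def]
        exact hae j
      · rw [Fintype.card_fin]
        exact lt_of_le_of_lt (le_trans Polynomial.natDegree_map_le
          (le_trans (Polynomial.natDegree_sub_le q q') (by simp [hq.2.1, hq'.2.1])))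
          (Nat.lt_succ_self n)
    have hinj : Function.Injective (algebraMap ℤ ℝ) := by
      rw [algebraMap_int_eq]
      intro a b h
      have h' : (a : ℝ) = (b : ℝ) := h
      exact_mod_cast h'
    have := (Polynomial.map_eq_zero_iff hinj).mp hz
    exact sub_eq_zero.mp this
  have himg : (fun q => fun j : Fin (n+1) => phi n q (j:ℕ)) '' T ⊆
      Set.pi Set.univ (fun _ : Fin (n+1) => Set.Icc (-((n:ℤ)^n)) ((n:ℤ)^n)) := by
    rintro v ⟨q, hq, rfl⟩
    intro j _
    have h1 : |((phi n q (j:ℕ) : ℤ) : ℝ)| ≤ (n:ℝ)^n := by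
      rw [phi_eq n hn q hq.2.1 j, abs_mul, abs_of_nonneg (by positivity : (0:ℝ) ≤ (n:ℝ)^n)]
      calc (n:ℝ)^n * |(aeval (((j:ℕ):ℝ)/n) q : ℝ)|
          ≤ (n:ℝ)^n * 1 := by
            refine mul_le_mul_of_nonneg_left ?_ (by positivity)
            exact le_trans (le_supNorm q (hmem j)) hq.2.2
        _ = (n:ℝ)^n := mul_one _
    have h2 : |phi n q (j:ℕ)| ≤ (n:ℤ)^n := by exact_mod_cast h1
    rw [Set.mem_Icc]
    exact abs_le.mp h2
  exact Set.Finite.of_finite_image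
    ((Set.Finite.pi fun i => Set.finite_Icc _ _).subset himg) hInj

lemma exists_min (n : ℕ) (hn : 0 < n) :
    ∃ q : Polynomial ℤ, q ≠ 0 ∧ q.natDegree ≤ n ∧
      ∀ p : Polynomial ℤ, p ≠ 0 → p.natDegree ≤ n → supNorm q 0 1 ≤ supNorm p 0 1 := by
  have hfin := finite_T n hn
  have hne : (1 : Polynomial ℤ) ∈
      {q : Polynomial ℤ | q ≠ 0 ∧ q.natDegree ≤ n ∧ supNorm q 0 1 ≤ 1} :=
    ⟨one_ne_zero, by simp, le_of_eq supNorm_one⟩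
  obtain ⟨q, hqT, hmin⟩ := Set.exists_min_image _ (fun p => supNorm p 0 1) hfin ⟨1, hne⟩
  refine ⟨q, hqT.1, hqT.2.1, fun p hp hdeg => ?_⟩
  by_cases hple : supNorm p 0 1 ≤ 1
  · exact hmin p ⟨hp, hdeg, hple⟩
  · exact le_trans (le_trans (hmin 1 hne) (le_of_eq supNorm_one)) (le_of_not_ge hple)


/-- The substitution polynomial `u = X(1-X)`. -/
noncomputable def W : Polynomial ℤ := Polynomial.X * (1 - Polynomial.X)

lemma W_eq : W = -(Polynomial.X * (Polynomial.X - Polynomial.C 1)) := by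
  unfold W; rw [Polynomial.C_1]; ring

lemma natDegree_V : (Polynomial.X * (Polynomial.X - Polynomial.C 1) : Polynomial ℤ).natDegree = 2 := by
  rw [Polynomial.natDegree_mul Polynomial.X_ne_zero (Polynomial.X_sub_C_ne_zero 1),
    Polynomial.natDegree_X, Polynomial.natDegree_X_sub_C]

lemma monic_V : (Polynomial.X * (Polynomial.X - Polynomial.C 1) : Polynomial ℤ).Monic :=
  Polynomial.monic_X.mul (Polynomial.monic_X_sub_C 1)

lemma natDegree_W : W.natDegree = 2 := by
  rw [W_eq, Polynomial.natDegree_neg, natDegree_V]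

lemma natDegree_W_pow_le (m : ℕ) : (W ^ m).natDegree ≤ 2 * m := by
  rw [W_eq, neg_pow]
  refine le_trans (Polynomial.natDegree_mul_le) ?_
  simp only [Polynomial.natDegree_pow]
  have h1 : ((-1 : Polynomial ℤ)).natDegree = 0 := by
    rw [← Polynomial.C_1, ← Polynomial.C_neg, Polynomial.natDegree_C]
  rw [h1, natDegree_V]
  omega

lemma coeff_W_pow (m : ℕ) : (W ^ m).coeff (2 * m) = (-1)^m := by
  rw [W_eq, neg_pow]
  have hC : ((-1 : Polynomial ℤ)) ^ m = Polynomial.C ((-1)^m) := by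
    rw [← Polynomial.C_1, ← Polynomial.C_neg, ← Polynomial.C_pow]
  rw [hC, Polynomial.coeff_C_mul]
  have hdeg : ((Polynomial.X * (Polynomial.X - Polynomial.C 1) : Polynomial ℤ) ^ m).natDegree
      = 2 * m := by
    rw [monic_V.natDegree_pow, natDegree_V]; ring
  have := (monic_V.pow m).coeff_natDegree
  rw [hdeg] at this
  rw [this, mul_one]

lemma exists_decomp : ∀ (d : ℕ) (q : Polynomial ℤ), q.natDegree ≤ d →
    ∃ A B : Polynomial ℤ, q = A.comp W + Polynomial.X * B.comp W ∧
      A.natDegree ≤ d / 2 ∧ B.natDegree ≤ (d - 1) / 2 := by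
  intro d
  induction d with
  | zero =>
    intro q hq
    refine ⟨q, 0, ?_, hq, by simp⟩
    rw [Polynomial.eq_C_of_natDegree_le_zero hq]
    simp
  | succ d ih =>
    intro q hq
    set c := q.coeff (d+1) with hc
    rcases Nat.even_or_odd (d+1) with ⟨m, hm⟩ | ⟨m, hm⟩
    · -- d + 1 = m + m
      have hm1 : 1 ≤ m := by omega
      set E : Polynomial ℤ := Polynomial.C ((-1)^m * c) * W ^ m with hE
      have hEdeg : E.natDegree ≤ d + 1 := by
        refine le_trans (Polynomial.natDegree_C_mul_le _ _) ?_
        refine le_trans (natDegree_W_pow_le m) (by omega)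
      have hEc : E.coeff (d+1) = c := by
        have h2m : d + 1 = 2 * m := by omega
        rw [hE, Polynomial.coeff_C_mul, h2m, coeff_W_pow]
        rw [mul_right_comm, ← mul_pow]
        simp
      have hq' : (q - E).natDegree ≤ d := by
        rw [Polynomial.natDegree_le_iff_coeff_eq_zero]
        intro N hN
        rcases eq_or_lt_of_le (Nat.succ_le_of_lt hN) with h | h
        · rw [Polynomial.coeff_sub, ← h, ← hc, hEc, sub_self]
        · rw [Polynomial.coeff_sub,
            Polynomial.coeff_eq_zero_of_natDegree_lt (lt_of_le_of_lt hq h),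
            Polynomial.coeff_eq_zero_of_natDegree_lt (lt_of_le_of_lt hEdeg h), sub_self]
      obtain ⟨A', B', hdec, hA', hB'⟩ := ih (q - E) hq'
      refine ⟨A' + Polynomial.C ((-1)^m * c) * Polynomial.X ^ m, B', ?_, ?_, ?_⟩
      · have : (Polynomial.C ((-1)^m * c) * Polynomial.X ^ m).comp W = E := by
          rw [Polynomial.mul_comp, Polynomial.C_comp, Polynomial.X_pow_comp]
        rw [Polynomial.add_comp, this]
        have hqE : q = (q - E) + E := by ring
        rw [hqE, hdec]
        ring
      · refine le_trans (Polynomial.natDegree_add_le _ _) ?_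
        have h1 : (Polynomial.C ((-1)^m * c) * Polynomial.X ^ m).natDegree ≤ m :=
          le_trans (Polynomial.natDegree_C_mul_le _ _) (by rw [Polynomial.natDegree_X_pow])
        have h2 : A'.natDegree ≤ d / 2 := hA'
        omega
      · refine le_trans hB' ?_
        omega
    · -- d + 1 = 2 * m + 1
      set E : Polynomial ℤ := Polynomial.X * (Polynomial.C ((-1)^m * c) * W ^ m) with hE
      have hEdeg : E.natDegree ≤ d + 1 := by
        refine le_trans (Polynomial.natDegree_mul_le) ?_
        have h1 : (Polynomial.C ((-1)^m * c) * W ^ m).natDegree ≤ 2 * m :=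
          le_trans (Polynomial.natDegree_C_mul_le _ _) (natDegree_W_pow_le m)
        rw [Polynomial.natDegree_X]
        omega
      have hEc : E.coeff (d+1) = c := by
        have h2m : d + 1 = 2 * m + 1 := by omega
        rw [hE, h2m, Polynomial.coeff_X_mul, Polynomial.coeff_C_mul, coeff_W_pow,
          mul_right_comm, ← mul_pow]
        simp
      have hq' : (q - E).natDegree ≤ d := by
        rw [Polynomial.natDegree_le_iff_coeff_eq_zero]
        intro N hN
        rcases eq_or_lt_of_le (Nat.succ_le_of_lt hN) with h | h
        · rw [Polynomial.coeff_sub, ← h, ← hc, hEc, sub_self]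
        · rw [Polynomial.coeff_sub,
            Polynomial.coeff_eq_zero_of_natDegree_lt (lt_of_le_of_lt hq h),
            Polynomial.coeff_eq_zero_of_natDegree_lt (lt_of_le_of_lt hEdeg h), sub_self]
      obtain ⟨A', B', hdec, hA', hB'⟩ := ih (q - E) hq'
      refine ⟨A', B' + Polynomial.C ((-1)^m * c) * Polynomial.X ^ m, ?_, ?_, ?_⟩
      · have : (Polynomial.C ((-1)^m * c) * Polynomial.X ^ m).comp W
            = Polynomial.C ((-1)^m * c) * W ^ m := by
          rw [Polynomial.mul_comp, Polynomial.C_comp, Polynomial.X_pow_comp]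
        rw [Polynomial.add_comp, this]
        have hqE : q = (q - E) + E := by ring
        rw [hqE, hdec, hE]
        ring
      · refine le_trans hA' ?_
        omega
      · refine le_trans (Polynomial.natDegree_add_le _ _) ?_
        have h1 : (Polynomial.C ((-1)^m * c) * Polynomial.X ^ m).natDegree ≤ m :=
          le_trans (Polynomial.natDegree_C_mul_le _ _) (by rw [Polynomial.natDegree_X_pow])
        omega


lemma natDegree_twoXsubOne : (2 * Polynomial.X - 1 : Polynomial ℤ).natDegree = 1 := by
  have h : (2 * Polynomial.X - 1 : Polynomial ℤ)
      = Polynomial.C 2 * Polynomial.X + Polynomial.C (-1) := by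
    have h2 : (Polynomial.C 2 : Polynomial ℤ) = 2 := by
      norm_num
    rw [h2, Polynomial.C_neg, Polynomial.C_1]
    ring
  rw [h, Polynomial.natDegree_linear (by norm_num : (2:ℤ) ≠ 0)]

lemma twoXsubOne_ne_zero : (2 * Polynomial.X - 1 : Polynomial ℤ) ≠ 0 :=
  Polynomial.ne_zero_of_natDegree_gt (n := 0) (by rw [natDegree_twoXsubOne]; omega)

lemma natDegree_comp_W (g : Polynomial ℤ) : (g.comp W).natDegree = 2 * g.natDegree := by
  rw [Polynomial.natDegree_comp, natDegree_W]; ring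

lemma comp_W_ne_zero {g : Polynomial ℤ} (hg : g ≠ 0) : g.comp W ≠ 0 := by
  intro h
  have h1 := natDegree_comp_W g
  rw [h, Polynomial.natDegree_zero] at h1
  have h2 : g.natDegree = 0 := by omega
  have h3 := Polynomial.eq_C_of_natDegree_le_zero (le_of_eq h2)
  rw [h3, Polynomial.C_comp] at h
  exact hg (by rw [h3, Polynomial.C_eq_zero.mp h, Polynomial.C_0])

lemma candidate (n k : ℕ) (hnk : n = 2*k+1) (q : Polynomial ℤ) (hq0 : q ≠ 0)
    (hqmin : ∀ g : Polynomial ℤ, g ≠ 0 → g.natDegree ≤ n → supNorm q 0 1 ≤ supNorm g 0 1)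
    (p : Polynomial ℤ) (hp : p ≠ 0) (hpdeg : p.natDegree ≤ k)
    (hbd : ∀ x ∈ Set.Icc (0:ℝ) 1,
      |(aeval x ((2 * Polynomial.X - 1) * p.comp W) : ℝ)| ≤ supNorm q 0 1) :
    p.natDegree = k ∧
      supNorm ((2 * Polynomial.X - 1) * p.comp W) 0 1 = supNorm q 0 1 := by
  set M := supNorm q 0 1 with hM
  set r := (2 * Polynomial.X - 1) * p.comp W with hr
  have hrne : r ≠ 0 := mul_ne_zero twoXsubOne_ne_zero (comp_W_ne_zero hp)
  have hrdeg : r.natDegree ≤ n := by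
    refine le_trans (Polynomial.natDegree_mul_le) ?_
    rw [natDegree_twoXsubOne, natDegree_comp_W]
    omega
  have hsup_le : supNorm r 0 1 ≤ M := supNorm_le _ hbd
  have hsup_ge : M ≤ supNorm r 0 1 := hqmin r hrne hrdeg
  have hMpos : 0 < M := supNorm_pos hq0
  constructor
  · by_contra hne
    have hplt : p.natDegree + 1 ≤ k := by omega
    set r2 := (2 * Polynomial.X - 1) * (Polynomial.X * p).comp W with hr2
    have hr2eq : r2 = W * r := by
      rw [hr2, hr, Polynomial.mul_comp, Polynomial.X_comp]
      ring
    have hr2ne : r2 ≠ 0 := mul_ne_zero twoXsubOne_ne_zero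
      (comp_W_ne_zero (mul_ne_zero Polynomial.X_ne_zero hp))
    have hr2deg : r2.natDegree ≤ n := by
      refine le_trans (Polynomial.natDegree_mul_le) ?_
      rw [natDegree_twoXsubOne, natDegree_comp_W]
      have : (Polynomial.X * p).natDegree ≤ 1 + p.natDegree := by
        refine le_trans (Polynomial.natDegree_mul_le) ?_
        rw [Polynomial.natDegree_X]
      omega
    have hbd2 : ∀ x ∈ Set.Icc (0:ℝ) 1, |(aeval x r2 : ℝ)| ≤ (1/4) * M := by
      intro x hx
      rw [hr2eq, map_mul, abs_mul]
      have hW : (aeval x W : ℝ) = x * (1 - x) := by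
        unfold W
        simp
      have hW4 : |(aeval x W : ℝ)| ≤ 1/4 := by
        rw [hW, abs_le]
        obtain ⟨h0, h1⟩ := hx
        constructor
        · nlinarith
        · nlinarith [sq_nonneg (x - 1/2)]
      exact mul_le_mul hW4 (hbd x hx) (abs_nonneg _) (by norm_num)
    have h1 : M ≤ supNorm r2 0 1 := hqmin r2 hr2ne hr2deg
    have h2 : supNorm r2 0 1 ≤ (1/4) * M := supNorm_le _ hbd2
    linarith
  · exact le_antisymm hsup_le hsup_ge

end IntCheb

open IntCheb

theorem stmt_9 (n : ℕ) (hn : 0 < n) (hodd : Odd n) :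
    ∃ p : Polynomial ℤ, p.natDegree = (n - 1) / 2 ∧
      supNorm ((2 * Polynomial.X - 1) * p.comp (Polynomial.X * (1 - Polynomial.X))) 0 1
          ^ ((1 : ℝ) / n) = tZ n 0 1 := by
  obtain ⟨k, hk⟩ := hodd
  obtain ⟨q, hq0, hqdeg, hqmin⟩ := exists_min n hn
  set M := supNorm q 0 1 with hM
  -- the decomposition
  obtain ⟨A, B, hdec, hA, hB⟩ := exists_decomp n q hqdeg
  have hAk : A.natDegree ≤ k := le_trans hA (by omega)
  have hBk : (A + B).natDegree ≤ k :=
    le_trans (Polynomial.natDegree_add_le _ _) (by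
      have := hA; have := hB; omega)
  -- composition identities
  have hWc : W.comp (1 - Polynomial.X) = W := by
    unfold W
    simp only [Polynomial.mul_comp, Polynomial.sub_comp, Polynomial.one_comp,
      Polynomial.X_comp]
    ring
  have hqc : q.comp (1 - Polynomial.X) = A.comp W + (1 - Polynomial.X) * B.comp W := by
    conv_lhs => rw [hdec]
    rw [Polynomial.add_comp, Polynomial.mul_comp, Polynomial.X_comp,
      Polynomial.comp_assoc, Polynomial.comp_assoc, hWc]
  have hid1 : (Polynomial.X - 1) * q + Polynomial.X * (q.comp (1 - Polynomial.X))
      = (2 * Polynomial.X - 1) * A.comp W := by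
    conv_lhs => rw [hqc, hdec]
    ring
  have hid2 : Polynomial.X * q + (Polynomial.X - 1) * (q.comp (1 - Polynomial.X))
      = (2 * Polynomial.X - 1) * (A + B).comp W := by
    conv_lhs => rw [hqc, hdec]
    rw [Polynomial.add_comp]
    ring
  -- pointwise bound for both candidates
  have hkey : ∀ (G : Polynomial ℤ) (a b : Polynomial ℤ),
      (a * q + b * (q.comp (1 - Polynomial.X)) = (2 * Polynomial.X - 1) * G.comp W) →
      (∀ x ∈ Set.Icc (0:ℝ) 1, |(aeval x a : ℝ)| + |(aeval x b : ℝ)| ≤ 1) →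
      ∀ x ∈ Set.Icc (0:ℝ) 1,
        |(aeval x ((2 * Polynomial.X - 1) * G.comp W) : ℝ)| ≤ M := by
    intro G a b hid habs x hx
    have h1x : (1 : ℝ) - x ∈ Set.Icc (0:ℝ) 1 := by
      obtain ⟨h0, h1⟩ := hx
      constructor <;> linarith
    have hcomp : (aeval x (q.comp (1 - Polynomial.X)) : ℝ) = aeval (1 - x) q := by
      rw [Polynomial.aeval_comp]
      simp
    have hqx : |(aeval x q : ℝ)| ≤ M := le_supNorm q hx
    have hq1x : |(aeval (1 - x) q : ℝ)| ≤ M := le_supNorm q h1x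
    rw [← hid, map_add, map_mul, map_mul, hcomp]
    calc |(aeval x a : ℝ) * aeval x q + (aeval x b : ℝ) * aeval (1-x) q|
        ≤ |(aeval x a : ℝ)| * |(aeval x q : ℝ)| + |(aeval x b : ℝ)| * |(aeval (1-x) q : ℝ)| := by
          refine le_trans (abs_add_le _ _) ?_
          rw [abs_mul, abs_mul]
      _ ≤ |(aeval x a : ℝ)| * M + |(aeval x b : ℝ)| * M := by
          have h0 : (0:ℝ) ≤ M := supNorm_nonneg q
          gcongr
      _ = (|(aeval x a : ℝ)| + |(aeval x b : ℝ)|) * M := by ring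
      _ ≤ 1 * M := by
          refine mul_le_mul_of_nonneg_right (habs x hx) (supNorm_nonneg q)
      _ = M := one_mul M
  -- choose the nonzero candidate
  have habs1 : ∀ x ∈ Set.Icc (0:ℝ) 1,
      |(aeval x (Polynomial.X - 1 : Polynomial ℤ) : ℝ)| + |(aeval x (Polynomial.X : Polynomial ℤ) : ℝ)| ≤ 1 := by
    intro x hx
    obtain ⟨h0, h1⟩ := hx
    simp only [map_sub, Polynomial.aeval_X, map_one]
    rw [abs_of_nonpos (by linarith), abs_of_nonneg h0]
    linarith
  have habs2 : ∀ x ∈ Set.Icc (0:ℝ) 1,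
      |(aeval x (Polynomial.X : Polynomial ℤ) : ℝ)| + |(aeval x (Polynomial.X - 1 : Polynomial ℤ) : ℝ)| ≤ 1 := by
    intro x hx
    rw [add_comm]
    exact habs1 x hx
  have htZ : tZ n 0 1 = M ^ ((1:ℝ)/n) := by
    refine le_antisymm ?_ ?_
    · refine csInf_le ?_ ⟨q, hq0, hqdeg, rfl⟩
      refine ⟨0, ?_⟩
      rintro y ⟨g, hg, hgdeg, rfl⟩
      exact Real.rpow_nonneg (IntCheb.supNorm_nonneg g) _
    · refine le_csInf ⟨_, q, hq0, hqdeg, rfl⟩ ?_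
      rintro y ⟨g, hg, hgdeg, rfl⟩
      exact Real.rpow_le_rpow (IntCheb.supNorm_nonneg q) (hqmin g hg hgdeg) (by positivity)
  have hWdef : W = Polynomial.X * (1 - Polynomial.X) := rfl
  by_cases hA0 : A = 0
  · -- use p = A + B = B
    have hABne : A + B ≠ 0 := by
      intro hab
      apply hq0
      have hB0 : B = 0 := by simpa [hA0] using hab
      rw [hdec, hA0, hB0]
      simp
    have hbd := hkey (A + B) _ _ hid2 habs2
    obtain ⟨hdegeq, hsupeq⟩ := candidate n k hk q hq0 hqmin (A + B) hABne hBk hbd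
    refine ⟨A + B, ?_, ?_⟩
    · rw [hdegeq]; omega
    · rw [← hWdef, hsupeq, htZ]
  · have hbd := hkey A _ _ hid1 habs1
    obtain ⟨hdegeq, hsupeq⟩ := candidate n k hk q hq0 hqmin A hA0 hAk hbd
    refine ⟨A, ?_, ?_⟩
    · rw [hdegeq]; omega
    · rw [← hWdef, hsupeq, htZ]
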